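/- For every Λ > 0, the (improper, convergent) integral ∫_{−Λ}^{Λ} (1/π) · ( cosh λ / cosh 2λ ) · √( cosh(2Λ) / ( sinh(Λ − λ) · sinh(Λ + λ) ) ) dλ equals 1. -/

import Mathlib

open Real MeasureTheory

/-- Derivative of `t ↦ s * t / √(1 + t²)`. -/
lemma stmt7_aux_hasDerivAt_u (s t : ℝ) :
    HasDerivAt (fun t : ℝ => s * t / Real.sqrt (1 + t ^ 2))
      (s / (Real.sqrt (1 + t ^ 2)) ^ 3) t := by
  have h1 : (0:ℝ) < 1 + t ^ 2 := by positivity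
  have hT : 0 < Real.sqrt (1 + t ^ 2) := Real.sqrt_pos.2 h1
  have hT2 : (Real.sqrt (1 + t ^ 2)) ^ 2 = 1 + t ^ 2 := Real.sq_sqrt h1.le
  have hin : HasDerivAt (fun t : ℝ => 1 + t ^ 2) (2 * t) t := by
    simpa using (hasDerivAt_pow 2 t).const_add 1
  have hsq : HasDerivAt (fun t : ℝ => Real.sqrt (1 + t ^ 2))
      (1 / (2 * Real.sqrt (1 + t ^ 2)) * (2 * t)) t :=
    (Real.hasDerivAt_sqrt h1.ne').comp t hin
  have hnum : HasDerivAt (fun t : ℝ => s * t) s t := by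
    simpa using (hasDerivAt_id t).const_mul s
  have hdiv : HasDerivAt (fun t : ℝ => s * t / Real.sqrt (1 + t ^ 2))
      ((s * Real.sqrt (1 + t ^ 2) - s * t * (1 / (2 * Real.sqrt (1 + t ^ 2)) * (2 * t))) /
        Real.sqrt (1 + t ^ 2) ^ 2) t := hnum.div hsq hT.ne'
  convert hdiv using 1
  set T := Real.sqrt (1 + t ^ 2)
  field_simp
  linear_combination (-s) * hT2

theorem stmt7 (Λ : ℝ) (hΛ : 0 < Λ) :
    ∫ x in (-Λ)..Λ, (1 / π) * (Real.cosh x / Real.cosh (2 * x)) *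
      Real.sqrt (Real.cosh (2 * Λ) / (Real.sinh (Λ - x) * Real.sinh (Λ + x))) = 1 := by
  have hs : 0 < Real.sinh Λ := Real.sinh_pos_iff.2 hΛ
  set s : ℝ := Real.sinh Λ with hs_def
  set c : ℝ := 1 + 2 * s ^ 2 with hc_def
  have hcΛ : Real.cosh (2 * Λ) = c := by
    rw [Real.cosh_two_mul, Real.cosh_sq']; ring
  have hcpos : (0:ℝ) < c := by positivity
  set u : ℝ → ℝ := fun t => s * t / Real.sqrt (1 + t ^ 2) with hu_def
  set φ : ℝ → ℝ := fun t => Real.arsinh (u t) with hφ_def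
  set φ' : ℝ → ℝ := fun t =>
    (Real.sqrt (1 + u t ^ 2))⁻¹ * (s / (Real.sqrt (1 + t ^ 2)) ^ 3) with hφ'_def
  -- basic facts about T = √(1+t²)
  have hTpos : ∀ t : ℝ, 0 < Real.sqrt (1 + t ^ 2) := fun t =>
    Real.sqrt_pos.2 (by positivity)
  have hT2 : ∀ t : ℝ, (Real.sqrt (1 + t ^ 2)) ^ 2 = 1 + t ^ 2 := fun t =>
    Real.sq_sqrt (by positivity)
  -- derivative of φ
  have hderiv : ∀ t : ℝ, HasDerivAt φ (φ' t) t := by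
    intro t
    exact (Real.hasDerivAt_arsinh (u t)).comp t (stmt7_aux_hasDerivAt_u s t)
  -- u is strictly monotone, hence φ injective
  have huderiv : ∀ t : ℝ, deriv u t = s / (Real.sqrt (1 + t ^ 2)) ^ 3 := fun t =>
    (stmt7_aux_hasDerivAt_u s t).deriv
  have humono : StrictMono u := by
    apply strictMono_of_deriv_pos
    intro t
    rw [huderiv t]
    exact div_pos hs (pow_pos (hTpos t) 3)
  have hinj : Set.InjOn φ Set.univ :=
    (Real.arsinh_injective.comp humono.injective).injOn
  -- |u t| < s
  have hu_lt : ∀ t : ℝ, |u t| < s := by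
    intro t
    have habs : |t| < Real.sqrt (1 + t ^ 2) := by
      have : |t| = Real.sqrt (t ^ 2) := (Real.sqrt_sq_eq_abs t).symm
      rw [this]
      exact Real.sqrt_lt_sqrt (sq_nonneg t) (by linarith)
    have hT := hTpos t
    rw [hu_def]
    rw [abs_div, abs_of_pos hT, abs_mul, abs_of_pos hs]
    rw [div_lt_iff₀ hT]
    calc s * |t| < s * Real.sqrt (1 + t ^ 2) := by
          exact (mul_lt_mul_iff_right₀ hs).2 habs
      _ = s * Real.sqrt (1 + t ^ 2) := rfl
  -- image of ℝ under φ is Ioo (-Λ) Λ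
  have himg : φ '' Set.univ = Set.Ioo (-Λ) Λ := by
    apply Set.eq_of_subset_of_subset
    · rintro x ⟨t, -, rfl⟩
      have h := hu_lt t
      rw [abs_lt] at h
      constructor
      · have : Real.arsinh (-s) < Real.arsinh (u t) := Real.arsinh_lt_arsinh.2 h.1
        rwa [show -s = Real.sinh (-Λ) by rw [Real.sinh_neg], Real.arsinh_sinh] at this
      · have : Real.arsinh (u t) < Real.arsinh s := Real.arsinh_lt_arsinh.2 h.2
        rwa [hs_def, Real.arsinh_sinh] at this
    · rintro x ⟨hx1, hx2⟩
      set v : ℝ := Real.sinh x with hv_def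
      have hv1 : -s < v := by
        rw [hv_def, hs_def, ← Real.sinh_neg]; exact Real.sinh_lt_sinh.2 hx1
      have hv2 : v < s := by
        rw [hv_def, hs_def]; exact Real.sinh_lt_sinh.2 hx2
      have hvs : v ^ 2 < s ^ 2 := sq_lt_sq' hv1 hv2
      set D : ℝ := Real.sqrt (s ^ 2 - v ^ 2) with hD_def
      have hDpos : 0 < D := Real.sqrt_pos.2 (by linarith)
      have hD2 : D ^ 2 = s ^ 2 - v ^ 2 := Real.sq_sqrt (by linarith)
      refine ⟨v / D, trivial, ?_⟩
      have hTeq : Real.sqrt (1 + (v / D) ^ 2) = s / D := by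
        have : 1 + (v / D) ^ 2 = (s / D) ^ 2 := by
          field_simp
          linarith [hD2]
        rw [this]
        exact Real.sqrt_sq (by positivity)
      have huv : u (v / D) = v := by
        rw [hu_def]
        simp only
        rw [hTeq]
        field_simp
      rw [hφ_def]
      simp only
      rw [huv, hv_def, Real.arsinh_sinh]
  -- the key pointwise identity
  have key : ∀ t : ℝ, |φ' t| • ((1 / π) * (Real.cosh (φ t) / Real.cosh (2 * φ t)) *
      Real.sqrt (Real.cosh (2 * Λ) / (Real.sinh (Λ - φ t) * Real.sinh (Λ + φ t))))
      = Real.sqrt c / π * (1 + c * t ^ 2)⁻¹ := by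
    intro t
    have hT := hTpos t
    have hT2t := hT2 t
    set T : ℝ := Real.sqrt (1 + t ^ 2) with hT_def
    have hUval : u t = s * t / T := rfl
    set U : ℝ := u t with hU_def
    have hU2 : U ^ 2 = s ^ 2 * t ^ 2 / (1 + t ^ 2) := by
      rw [hUval, div_pow, hT2t]; ring
    have hVpos : 0 < Real.sqrt (1 + U ^ 2) := Real.sqrt_pos.2 (by positivity)
    have hV2 : (Real.sqrt (1 + U ^ 2)) ^ 2 = 1 + U ^ 2 := Real.sq_sqrt (by positivity)
    set V : ℝ := Real.sqrt (1 + U ^ 2) with hV_def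
    -- cosh (φ t) = V
    have hcosh : Real.cosh (φ t) = V := Real.cosh_arsinh U
    -- cosh (2 φ t) = 1 + 2 U²
    have hcosh2 : Real.cosh (2 * φ t) = 1 + 2 * U ^ 2 := by
      rw [hφ_def]
      simp only
      rw [Real.cosh_two_mul, Real.cosh_sq', Real.sinh_arsinh]
      ring
    -- sinh (Λ - φ t) * sinh (Λ + φ t) = s² - U²
    have hsinhprod : Real.sinh (Λ - φ t) * Real.sinh (Λ + φ t) = s ^ 2 - U ^ 2 := by
      rw [Real.sinh_sub, Real.sinh_add, hφ_def]
      simp only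
      rw [Real.sinh_arsinh, Real.cosh_arsinh, ← hs_def]
      have hcΛ2 : Real.cosh Λ ^ 2 = 1 + s ^ 2 := by rw [Real.cosh_sq', hs_def]
      have hVu : Real.sqrt (1 + U ^ 2) ^ 2 = 1 + U ^ 2 := hV2
      nlinarith [hVu, hcΛ2]
    -- s² - U² = (s/T)²
    have hsU : s ^ 2 - U ^ 2 = (s / T) ^ 2 := by
      rw [hU2, div_pow, hT2t]
      field_simp
      ring
    -- √(c / (s² - U²)) = √c * T / s
    have hsqrt : Real.sqrt (c / (s ^ 2 - U ^ 2)) = Real.sqrt c * T / s := by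
      rw [hsU]
      have : c / (s / T) ^ 2 = (Real.sqrt c * T / s) ^ 2 := by
        rw [div_pow, div_pow, mul_pow, Real.sq_sqrt hcpos.le]
        field_simp
      rw [this]
      exact Real.sqrt_sq (by positivity)
    -- 1 + 2U² = (1 + c t²)/T²
    have h2U : 1 + 2 * U ^ 2 = (1 + c * t ^ 2) / T ^ 2 := by
      rw [hU2, hT2t, hc_def]
      field_simp
      ring
    have hctpos : (0:ℝ) < 1 + c * t ^ 2 := by positivity
    -- |φ' t|
    have hφ'val : φ' t = V⁻¹ * (s / T ^ 3) := rfl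
    have hφ'pos : 0 < φ' t := by
      rw [hφ'val]
      positivity
    rw [smul_eq_mul, abs_of_pos hφ'pos, hφ'val, hcΛ, hcosh, hcosh2, hsinhprod, hsqrt, h2U]
    have hπ : (0:ℝ) < π := Real.pi_pos
    field_simp
  -- now transform the integral
  have hle : -Λ ≤ Λ := by linarith
  rw [intervalIntegral.integral_of_le hle, MeasureTheory.integral_Ioc_eq_integral_Ioo,
    ← himg,
    MeasureTheory.integral_image_eq_integral_abs_deriv_smul MeasurableSet.univ
      (fun t _ => (hderiv t).hasDerivWithinAt) hinj,
    MeasureTheory.Measure.restrict_univ]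
  rw [show (fun t => |φ' t| • ((1 / π) * (Real.cosh (φ t) / Real.cosh (2 * φ t)) *
      Real.sqrt (Real.cosh (2 * Λ) / (Real.sinh (Λ - φ t) * Real.sinh (Λ + φ t)))))
      = fun t => Real.sqrt c / π * (1 + c * t ^ 2)⁻¹ from funext key]
  rw [MeasureTheory.integral_const_mul]
  have hsc : Real.sqrt c > 0 := Real.sqrt_pos.2 hcpos
  have hrw : (fun t : ℝ => (1 + c * t ^ 2)⁻¹)
      = fun t : ℝ => (1 + (Real.sqrt c * t) ^ 2)⁻¹ := by
    funext t
    rw [mul_pow, Real.sq_sqrt hcpos.le]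
  rw [hrw]
  rw [MeasureTheory.Measure.integral_comp_mul_left (fun y : ℝ => (1 + y ^ 2)⁻¹) (Real.sqrt c)]
  rw [integral_univ_inv_one_add_sq, smul_eq_mul, abs_of_pos (inv_pos.2 hsc)]
  field_simp
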